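/- Let 𝒫 be a nonempty set of Borel probability measures on Ω = C₀^d(ℝ⁺) that is compact in the topology of weak convergence of probability measures and satisfies sup_{P∈𝒫} ∫ ψ(ω(t₁),…,ω(t_m)) dP < ∞ for every m ≥ 1, every 0 ≤ t₁ < … < t_m and every nonnegative ψ ∈ C_{l.Lip}(ℝ^{d×m}). Let 𝕃¹ be the set of Borel measurable X : Ω → ℝ with Ê[|X|] := sup_{P∈𝒫} ∫ |X| dP < ∞, equipped with the pseudometric d(X,Y) := sup_{P∈𝒫} ∫ |X − Y| dP. Then the closure of L_ip(Ω) in (𝕃¹, d) equals the closure of the set C_b(Ω) of bounded continuous real-valued functions on Ω in (𝕃¹, d). -/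

import Mathlib

open MeasureTheory Filter Topology
open scoped NNReal ENNReal

noncomputable section

/-- The space `Ω = C₀^d(ℝ⁺)` of continuous paths `ω : [0,∞) → ℝ^d` with `ω 0 = 0`,
with the topology of uniform convergence on compacts (induced by the metric `ρ`). -/
def OmegaC (d : ℕ) : Type := {ω : C(ℝ≥0, EuclideanSpace ℝ (Fin d)) // ω 0 = 0}

instance (d : ℕ) : TopologicalSpace (OmegaC d) := instTopologicalSpaceSubtype
instance (d : ℕ) : MeasurableSpace (OmegaC d) := borel _
instance (d : ℕ) : BorelSpace (OmegaC d) := ⟨rfl⟩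

/-- The class `C_{l.Lip}`. -/
def CLlip {E : Type*} [NormedAddCommGroup E] (φ : E → ℝ) : Prop :=
  Continuous φ ∧ ∃ (C : ℝ) (k : ℕ), 0 ≤ C ∧
    ∀ x y : E, |φ x - φ y| ≤ C * (1 + ‖x‖ ^ k + ‖y‖ ^ k) * ‖x - y‖

/-- The space `L_ip(Ω)` of Lipschitz cylinder functions on `OmegaC d`. -/
def LipCyl (d : ℕ) : Set (OmegaC d → ℝ) :=
  {X | ∃ (m : ℕ) (t : Fin m → ℝ≥0) (φ : (Fin m → EuclideanSpace ℝ (Fin d)) → ℝ),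
    1 ≤ m ∧ StrictMono t ∧ CLlip φ ∧ ∀ ω : OmegaC d, X ω = φ (fun i => ω.1 (t i))}

/-- The upper expectation `Ê[|f|] = sup_{P∈𝒫} ∫ |f| dP ∈ [0,∞]`. -/
def upperExpAbs {d : ℕ} (P : Set (ProbabilityMeasure (OmegaC d))) (f : OmegaC d → ℝ) : ℝ≥0∞ :=
  ⨆ p ∈ P, ∫⁻ ω, ENNReal.ofReal |f ω| ∂(p : Measure (OmegaC d))

/-- The closure of a set `S` of functions inside `𝕃¹ = {X Borel : Ê[|X|] < ∞}` with respect
to the pseudometric `d(X,Y) = Ê[|X − Y|]`. -/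
def closureInL1 {d : ℕ} (P : Set (ProbabilityMeasure (OmegaC d)))
    (S : Set (OmegaC d → ℝ)) : Set (OmegaC d → ℝ) :=
  {X | Measurable X ∧ upperExpAbs P X < ∞ ∧
    ∀ ε : ℝ, 0 < ε → ∃ Y ∈ S, upperExpAbs P (fun ω => X ω - Y ω) ≤ ENNReal.ofReal ε}


variable {d : ℕ}

local notation "Ed" => EuclideanSpace ℝ (Fin d)

/-- restriction distance on horizon `[0,T]` -/
def pathDist (T : ℕ) (a b : C(ℝ≥0, Ed)) : ℝ :=
  dist (a.restrict (Set.Icc 0 (T : ℝ≥0))) (b.restrict (Set.Icc 0 (T : ℝ≥0)))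

lemma pathDist_nonneg (T : ℕ) (a b : C(ℝ≥0, Ed)) : 0 ≤ pathDist T a b := dist_nonneg

lemma pathDist_apply_le {T : ℕ} {a b : C(ℝ≥0, Ed)} {t : ℝ≥0} (ht : t ≤ (T : ℝ≥0)) :
    dist (a t) (b t) ≤ pathDist T a b := by
  have := ContinuousMap.dist_apply_le_dist (f := a.restrict (Set.Icc 0 (T : ℝ≥0)))
    (g := b.restrict (Set.Icc 0 (T : ℝ≥0))) ⟨t, ⟨zero_le, ht⟩⟩
  simpa [pathDist, ContinuousMap.restrict_apply] using this

lemma pathDist_le {T : ℕ} {a b : C(ℝ≥0, Ed)} {C : ℝ} (hC : 0 ≤ C)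
    (h : ∀ t : ℝ≥0, t ≤ (T : ℝ≥0) → dist (a t) (b t) ≤ C) : pathDist T a b ≤ C := by
  rw [pathDist, ContinuousMap.dist_le hC]
  rintro ⟨t, ht0, htT⟩
  simpa [ContinuousMap.restrict_apply] using h t htT

/-- the metric `ρ` on path space -/
def rho (a b : C(ℝ≥0, Ed)) : ℝ :=
  ∑' i : ℕ, (1 / 2 : ℝ) ^ (i + 1) * min 1 (pathDist (i + 1) a b)

lemma summable_half_pow : Summable (fun i : ℕ => (1 / 2 : ℝ) ^ (i + 1)) := by
  simpa [pow_succ, mul_comm] using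
    (summable_geometric_of_lt_one (by norm_num : (0:ℝ) ≤ 1/2) (by norm_num)).mul_left (1/2 : ℝ)

lemma tsum_half_pow : ∑' i : ℕ, (1 / 2 : ℝ) ^ (i + 1) = 1 := by
  have h : ∑' i : ℕ, (1 / 2 : ℝ) ^ i = 2 := tsum_geometric_two
  calc ∑' i : ℕ, (1 / 2 : ℝ) ^ (i + 1) = ∑' i : ℕ, (1/2 : ℝ) * (1/2)^i := by
        simp [pow_succ, mul_comm]
    _ = (1/2 : ℝ) * 2 := by rw [tsum_mul_left, h]
    _ = 1 := by norm_num

lemma rho_term_nonneg (a b : C(ℝ≥0, Ed)) (i : ℕ) :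
    0 ≤ (1 / 2 : ℝ) ^ (i + 1) * min 1 (pathDist (i + 1) a b) := by
  apply mul_nonneg (by positivity)
  exact le_min zero_le_one (pathDist_nonneg _ _ _)

lemma rho_term_le (a b : C(ℝ≥0, Ed)) (i : ℕ) :
    (1 / 2 : ℝ) ^ (i + 1) * min 1 (pathDist (i + 1) a b) ≤ (1 / 2 : ℝ) ^ (i + 1) := by
  nth_rewrite 2 [← mul_one ((1 / 2 : ℝ) ^ (i + 1))]
  exact mul_le_mul_of_nonneg_left (min_le_left _ _) (by positivity)

lemma rho_summable (a b : C(ℝ≥0, Ed)) :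
    Summable (fun i : ℕ => (1 / 2 : ℝ) ^ (i + 1) * min 1 (pathDist (i + 1) a b)) := by
  apply Summable.of_nonneg_of_le (rho_term_nonneg a b) (rho_term_le a b) summable_half_pow

lemma rho_nonneg (a b : C(ℝ≥0, Ed)) : 0 ≤ rho a b :=
  tsum_nonneg (rho_term_nonneg a b)

lemma rho_le_one (a b : C(ℝ≥0, Ed)) : rho a b ≤ 1 := by
  rw [← tsum_half_pow]
  exact Summable.tsum_le_tsum (rho_term_le a b) (rho_summable a b) summable_half_pow

lemma rho_self (a : C(ℝ≥0, Ed)) : rho a a = 0 := by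
  simp [rho, pathDist]

lemma rho_comm (a b : C(ℝ≥0, Ed)) : rho a b = rho b a := by
  simp [rho, pathDist, dist_comm]

lemma rho_triangle (a b c : C(ℝ≥0, Ed)) : rho a c ≤ rho a b + rho b c := by
  simp only [rho]
  rw [← Summable.tsum_add (rho_summable a b) (rho_summable b c)]
  apply Summable.tsum_le_tsum _ (rho_summable a c)
    ((rho_summable a b).add (rho_summable b c))
  intro i
  rw [← mul_add]
  apply mul_le_mul_of_nonneg_left _ (by positivity)
  have htri : pathDist (i+1) a c ≤ pathDist (i+1) a b + pathDist (i+1) b c := dist_triangle _ _ _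
  rcases le_total 1 (pathDist (i+1) a b) with h | h
  · calc min 1 (pathDist (i+1) a c) ≤ 1 := min_le_left _ _
      _ ≤ min 1 (pathDist (i+1) a b) + min 1 (pathDist (i+1) b c) := by
          have := le_min le_rfl h
          have h2 : 0 ≤ min 1 (pathDist (i+1) b c) := le_min zero_le_one (pathDist_nonneg _ _ _)
          linarith [min_eq_left h]
  · rcases le_total 1 (pathDist (i+1) b c) with h' | h'
    · have h2 : 0 ≤ min 1 (pathDist (i+1) a b) := le_min zero_le_one (pathDist_nonneg _ _ _)
      have : min 1 (pathDist (i+1) b c) = 1 := min_eq_left h'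
      calc min 1 (pathDist (i+1) a c) ≤ 1 := min_le_left _ _
        _ ≤ _ := by linarith
    · calc min 1 (pathDist (i+1) a c) ≤ pathDist (i+1) a b + pathDist (i+1) b c :=
            le_trans (min_le_right _ _) htri
        _ = min 1 (pathDist (i+1) a b) + min 1 (pathDist (i+1) b c) := by
            rw [min_eq_right h, min_eq_right h']

lemma rho_term_le_rho (a b : C(ℝ≥0, Ed)) (i : ℕ) :
    (1 / 2 : ℝ) ^ (i + 1) * min 1 (pathDist (i + 1) a b) ≤ rho a b :=
  Summable.le_tsum (rho_summable a b) i (fun j _ => rho_term_nonneg a b j)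

lemma rho_continuous (a : C(ℝ≥0, Ed)) : Continuous (fun b => rho a b) := by
  apply continuous_tsum
  · intro i
    apply Continuous.mul continuous_const
    apply Continuous.min continuous_const
    exact (Continuous.dist continuous_const (ContinuousMap.continuous_restrict _))
  · exact summable_half_pow
  · intro i b
    rw [Real.norm_eq_abs, abs_of_nonneg (rho_term_nonneg a b i)]
    exact rho_term_le a b i

/-- `ρ(a,b) ≤ head + tail` splitting -/
lemma rho_le_head_tail (a b : C(ℝ≥0, Ed)) (T : ℕ) :
    rho a b ≤ (∑ i ∈ Finset.range T, (1 / 2 : ℝ) ^ (i + 1) * min 1 (pathDist (i + 1) a b))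
      + (1 / 2 : ℝ) ^ T := by
  rw [rho, ← Summable.sum_add_tsum_nat_add T (rho_summable a b)]
  gcongr
  calc ∑' i : ℕ, (1/2:ℝ)^(i + T + 1) * min 1 (pathDist (i + T + 1) a b)
      ≤ ∑' i : ℕ, (1/2:ℝ)^(i + T + 1) := by
        apply Summable.tsum_le_tsum _ _ (summable_half_pow.comp_injective (add_left_injective T))
        · intro i
          simpa using rho_term_le a b (i + T)
        · have := (rho_summable a b).comp_injective (add_left_injective T)
          simpa [Function.comp_def] using this
    _ = (1/2:ℝ)^T * ∑' i : ℕ, (1/2:ℝ)^(i+1) := by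
        rw [← tsum_mul_left]
        congr 1; funext i; ring
    _ = (1/2:ℝ)^T := by rw [tsum_half_pow, mul_one]
/-- pair space for the modulus of continuity on `[0,T+1]` -/
abbrev PairT (T : ℕ) : Type := (Set.Icc (0:ℝ≥0) ((T:ℝ≥0)+1)) × (Set.Icc (0:ℝ≥0) ((T:ℝ≥0)+1))

/-- soft cutoff: equals 1 when `|s-u| ≤ 1/n`, vanishes when `|s-u| ≥ 2/n` -/
def theta (T n : ℕ) (p : PairT T) : ℝ :=
  min 1 (max 0 (2 - n * |((p.1 : ℝ≥0) : ℝ) - ((p.2 : ℝ≥0) : ℝ)|))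

lemma theta_nonneg (T n : ℕ) (p : PairT T) : 0 ≤ theta T n p :=
  le_min zero_le_one (le_max_left _ _)

lemma theta_le_one (T n : ℕ) (p : PairT T) : theta T n p ≤ 1 := min_le_left _ _

lemma theta_anti (T : ℕ) {n m : ℕ} (h : n ≤ m) (p : PairT T) : theta T m p ≤ theta T n p := by
  apply min_le_min le_rfl
  apply max_le_max le_rfl
  have : (n:ℝ) ≤ m := by exact_mod_cast h
  nlinarith [abs_nonneg (((p.1 : ℝ≥0) : ℝ) - ((p.2 : ℝ≥0) : ℝ))]

lemma theta_eq_one {T n : ℕ} {p : PairT T} (h : (n:ℝ) * |((p.1 : ℝ≥0) : ℝ) - ((p.2 : ℝ≥0) : ℝ)| ≤ 1) :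
    theta T n p = 1 := by
  have : (1:ℝ) ≤ max 0 (2 - n * |((p.1 : ℝ≥0) : ℝ) - ((p.2 : ℝ≥0) : ℝ)|) :=
    le_max_of_le_right (by linarith)
  exact min_eq_left this

/-- the modulus test function on the compact pair space -/
def modFun (T n : ℕ) (a : C(Set.Icc (0:ℝ≥0) ((T:ℝ≥0)+1), Ed)) : C(PairT T, ℝ) where
  toFun := fun p => theta T n p * min 1 (dist (a p.1) (a p.2))
  continuous_toFun := by
    apply Continuous.mul
    · apply Continuous.min continuous_const
      apply Continuous.max continuous_const
      apply Continuous.sub continuous_const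
      apply Continuous.mul continuous_const
      apply Continuous.abs
      exact (NNReal.continuous_coe.comp (continuous_subtype_val.comp continuous_fst)).sub
        (NNReal.continuous_coe.comp (continuous_subtype_val.comp continuous_snd))
    · apply Continuous.min continuous_const
      exact Continuous.dist (a.continuous.comp continuous_fst) (a.continuous.comp continuous_snd)

lemma modFun_apply_nonneg (T n : ℕ) (a : C(Set.Icc (0:ℝ≥0) ((T:ℝ≥0)+1), Ed)) (p : PairT T) : 0 ≤ modFun T n a p :=
  mul_nonneg (theta_nonneg T n p) (le_min zero_le_one dist_nonneg)

lemma modFun_apply_le_one (T n : ℕ) (a : C(Set.Icc (0:ℝ≥0) ((T:ℝ≥0)+1), Ed)) (p : PairT T) : modFun T n a p ≤ 1 :=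
  mul_le_one₀ (theta_le_one T n p) (le_min zero_le_one dist_nonneg) (min_le_left _ _)

/-- `wtil T n a` : the (softened) modulus of continuity of `a` on `[0,T+1]` at mesh `1/n`. -/
def wtil (T n : ℕ) (a : C(ℝ≥0, Ed)) : ℝ :=
  ‖modFun T n (a.restrict (Set.Icc (0:ℝ≥0) ((T:ℝ≥0)+1)))‖

lemma wtil_nonneg (T n : ℕ) (a : C(ℝ≥0, Ed)) : 0 ≤ wtil T n a := norm_nonneg _

lemma wtil_le_one (T n : ℕ) (a : C(ℝ≥0, Ed)) : wtil T n a ≤ 1 := by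
  rw [wtil, ContinuousMap.norm_le _ zero_le_one]
  intro p
  rw [Real.norm_eq_abs, abs_of_nonneg (modFun_apply_nonneg _ _ _ _)]
  exact modFun_apply_le_one _ _ _ _

lemma le_wtil {T n : ℕ} {a : C(ℝ≥0, Ed)} (p : PairT T)
    (hθ : theta T n p = 1) :
    min 1 (dist (a ((p.1 : ℝ≥0))) (a ((p.2 : ℝ≥0)))) ≤ wtil T n a := by
  have h1 := ContinuousMap.norm_coe_le_norm
    (modFun T n (a.restrict (Set.Icc (0:ℝ≥0) ((T:ℝ≥0)+1)))) p
  rw [Real.norm_eq_abs, abs_of_nonneg (modFun_apply_nonneg _ _ _ _)] at h1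
  calc min 1 (dist (a ((p.1 : ℝ≥0))) (a ((p.2 : ℝ≥0))))
      = modFun T n (a.restrict (Set.Icc (0:ℝ≥0) ((T:ℝ≥0)+1))) p := by
        simp [modFun, hθ, ContinuousMap.restrict_apply]
    _ ≤ wtil T n a := h1

lemma wtil_anti (T : ℕ) {n m : ℕ} (h : n ≤ m) (a : C(ℝ≥0, Ed)) :
    wtil T m a ≤ wtil T n a := by
  rw [wtil, ContinuousMap.norm_le _ (wtil_nonneg T n a)]
  intro p
  rw [Real.norm_eq_abs, abs_of_nonneg (modFun_apply_nonneg _ _ _ _)]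
  calc modFun T m (a.restrict _) p
      ≤ modFun T n (a.restrict _) p := by
        apply mul_le_mul_of_nonneg_right (theta_anti T h p) (le_min zero_le_one dist_nonneg)
    _ ≤ wtil T n a := by
        have h1 := ContinuousMap.norm_coe_le_norm
          (modFun T n (a.restrict (Set.Icc (0:ℝ≥0) ((T:ℝ≥0)+1)))) p
        rw [Real.norm_eq_abs, abs_of_nonneg (modFun_apply_nonneg _ _ _ _)] at h1
        exact h1

lemma wtil_lipschitz (T n : ℕ) (a b : C(ℝ≥0, Ed)) :
    |wtil T n a - wtil T n b| ≤ 2 * pathDist (T+1) a b := by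
  have key : ∀ u v : C(ℝ≥0, Ed), wtil T n u ≤ wtil T n v + 2 * pathDist (T+1) u v := by
    intro u v
    rw [wtil, ContinuousMap.norm_le _ (add_nonneg (wtil_nonneg T n v) (mul_nonneg (by norm_num) (pathDist_nonneg _ _ _)))]
    intro p
    rw [Real.norm_eq_abs, abs_of_nonneg (modFun_apply_nonneg _ _ _ _)]
    have hv := ContinuousMap.norm_coe_le_norm
      (modFun T n (v.restrict (Set.Icc (0:ℝ≥0) ((T:ℝ≥0)+1)))) p
    rw [Real.norm_eq_abs, abs_of_nonneg (modFun_apply_nonneg _ _ _ _)] at hv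
    have hdd : dist (u ((p.1:ℝ≥0))) (u ((p.2:ℝ≥0)))
        ≤ dist (v ((p.1:ℝ≥0))) (v ((p.2:ℝ≥0))) + 2 * pathDist (T+1) u v := by
      have h1 : dist (u ((p.1:ℝ≥0))) (v ((p.1:ℝ≥0))) ≤ pathDist (T+1) u v := by
        apply pathDist_apply_le
        have := (p.1).2.2; push_cast; exact_mod_cast this
      have h2 : dist (u ((p.2:ℝ≥0))) (v ((p.2:ℝ≥0))) ≤ pathDist (T+1) u v := by
        apply pathDist_apply_le
        have := (p.2).2.2; push_cast; exact_mod_cast this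
      have := dist_triangle4 (u ((p.1:ℝ≥0))) (v ((p.1:ℝ≥0))) (v ((p.2:ℝ≥0))) (u ((p.2:ℝ≥0)))
      rw [dist_comm (v ((p.2:ℝ≥0))) (u ((p.2:ℝ≥0)))] at this
      linarith
    have hmin : min 1 (dist (u ((p.1:ℝ≥0))) (u ((p.2:ℝ≥0))))
        ≤ min 1 (dist (v ((p.1:ℝ≥0))) (v ((p.2:ℝ≥0)))) + 2 * pathDist (T+1) u v := by
      rcases le_total (1:ℝ) (dist (v ((p.1:ℝ≥0))) (v ((p.2:ℝ≥0)))) with h | h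
      · rw [min_eq_left h]
        have := pathDist_nonneg (T+1) u v
        have := min_le_left (1:ℝ) (dist (u ((p.1:ℝ≥0))) (u ((p.2:ℝ≥0))))
        linarith
      · rw [min_eq_right h]
        have := min_le_right (1:ℝ) (dist (u ((p.1:ℝ≥0))) (u ((p.2:ℝ≥0))))
        linarith [min_le_left (1:ℝ) (dist (u ((p.1:ℝ≥0))) (u ((p.2:ℝ≥0)))), hdd]
    calc modFun T n (u.restrict _) p
        = theta T n p * min 1 (dist (u ((p.1:ℝ≥0))) (u ((p.2:ℝ≥0)))) := by
          simp [modFun, ContinuousMap.restrict_apply]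
      _ ≤ theta T n p * min 1 (dist (v ((p.1:ℝ≥0))) (v ((p.2:ℝ≥0)))) + 2 * pathDist (T+1) u v := by
          have h2 : 0 ≤ 2 * pathDist (T+1) u v := mul_nonneg (by norm_num) (pathDist_nonneg _ _ _)
          nlinarith [theta_nonneg T n p, theta_le_one T n p,
            le_min zero_le_one (dist_nonneg (x := u ((p.1:ℝ≥0))) (y := u ((p.2:ℝ≥0))))]
      _ = modFun T n (v.restrict _) p + 2 * pathDist (T+1) u v := by
          simp [modFun, ContinuousMap.restrict_apply]
      _ ≤ wtil T n v + 2 * pathDist (T+1) u v := by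
          rw [wtil]; exact add_le_add_left hv _
  rw [abs_sub_le_iff]
  have hsymm : pathDist (T+1) b a = pathDist (T+1) a b := dist_comm _ _
  constructor
  · have := key a b; linarith
  · have h := key b a
    rw [hsymm] at h
    linarith

lemma wtil_continuous (T n : ℕ) : Continuous (fun a : C(ℝ≥0, Ed) => wtil T n a) := by
  rw [continuous_iff_continuousAt]
  intro a
  rw [ContinuousAt, tendsto_iff_dist_tendsto_zero]
  have hg : Tendsto (fun b : C(ℝ≥0, Ed) => 2 * pathDist (T+1) b a) (𝓝 a) (𝓝 0) := by
    have h1 : Continuous (fun b : C(ℝ≥0, Ed) => 2 * pathDist (T+1) b a) :=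
      continuous_const.mul (Continuous.dist (ContinuousMap.continuous_restrict _) continuous_const)
    have h3 := h1.tendsto a
    have h2 : 2 * pathDist (T+1) a a = 0 := by rw [pathDist, dist_self, mul_zero]
    rwa [h2] at h3
  exact squeeze_zero (fun b => dist_nonneg)
    (fun b => by rw [Real.dist_eq]; exact wtil_lipschitz T n b a) hg

/-- pointwise convergence of the modulus to zero -/
lemma wtil_tendsto_zero (T : ℕ) (a : C(ℝ≥0, Ed)) :
    Tendsto (fun n => wtil T n a) atTop (𝓝 0) := by
  have key : ∀ ε : ℝ, 0 < ε → ∃ N : ℕ, ∀ n ≥ N, wtil T n a ≤ ε := by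
    intro ε hε
    set a' := a.restrict (Set.Icc (0:ℝ≥0) ((T:ℝ≥0)+1)) with ha'
    have hu : UniformContinuous a' := CompactSpace.uniformContinuous_of_continuous a'.continuous
    rw [Metric.uniformContinuous_iff] at hu
    obtain ⟨δ, hδ, hδ'⟩ := hu ε hε
    obtain ⟨N, hN⟩ := exists_nat_gt (2 / δ)
    refine ⟨N, fun n hn => ?_⟩
    rw [wtil, ContinuousMap.norm_le _ (le_of_lt hε)]
    intro p
    rw [Real.norm_eq_abs, abs_of_nonneg (modFun_apply_nonneg _ _ _ _)]
    by_cases hθ : theta T n p = 0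
    · rw [← ha', modFun]; simp only [ContinuousMap.coe_mk, hθ, zero_mul]; exact le_of_lt hε
    · have hlt : (n:ℝ) * |((p.1 : ℝ≥0) : ℝ) - ((p.2 : ℝ≥0) : ℝ)| < 2 := by
        by_contra hc
        push_neg at hc
        apply hθ
        rw [theta, max_eq_left (by linarith), min_eq_right zero_le_one]
      have hNpos : (0:ℝ) < N := lt_of_le_of_lt (by positivity) hN
      have hnpos : (0:ℝ) < n := lt_of_lt_of_le hNpos (by exact_mod_cast hn)
      have hdist : dist p.1 p.2 < δ := by
        have h2n : |((p.1 : ℝ≥0) : ℝ) - ((p.2 : ℝ≥0) : ℝ)| < 2 / n := by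
          rw [lt_div_iff₀ hnpos, mul_comm]; exact hlt
        have h2N : (2:ℝ) / n ≤ 2 / N := by
          apply div_le_div_of_nonneg_left (by norm_num) hNpos (by exact_mod_cast hn)
        have hδN : (2:ℝ) / N < δ := by
          rw [div_lt_iff₀ hNpos]
          rw [div_lt_iff₀ hδ] at hN
          linarith [hN]
        have : dist p.1 p.2 = |((p.1 : ℝ≥0) : ℝ) - ((p.2 : ℝ≥0) : ℝ)| := by
          rw [Subtype.dist_eq, NNReal.dist_eq]
        linarith
      have := le_of_lt (hδ' hdist)
      calc theta T n p * min 1 (dist (a' p.1) (a' p.2)) ≤ 1 * min 1 (dist (a' p.1) (a' p.2)) := by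
            apply mul_le_mul_of_nonneg_right (theta_le_one _ _ _)
              (le_min zero_le_one dist_nonneg)
        _ ≤ ε := by rw [one_mul]; exact le_trans (min_le_right _ _) this
  rw [Metric.tendsto_atTop]
  intro ε hε
  obtain ⟨N, hN⟩ := key (ε/2) (by linarith)
  refine ⟨N, fun n hn => ?_⟩
  rw [Real.dist_eq, sub_zero, abs_of_nonneg (wtil_nonneg _ _ _)]
  exact lt_of_le_of_lt (hN n hn) (by linarith)
/-! ### Piecewise linear interpolation -/
set_option maxHeartbeats 2000000

def clampc (n j : ℕ) (t : ℝ≥0) : ℝ := min 1 (max 0 ((n : ℝ) * (t : ℝ) - j))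

lemma clampc_nonneg (n j : ℕ) (t : ℝ≥0) : 0 ≤ clampc n j t :=
  le_min zero_le_one (le_max_left _ _)

lemma clampc_le_one (n j : ℕ) (t : ℝ≥0) : clampc n j t ≤ 1 := min_le_left _ _

lemma clampc_anti (n : ℕ) {j j' : ℕ} (h : j ≤ j') (t : ℝ≥0) :
    clampc n j' t ≤ clampc n j t := by
  apply min_le_min le_rfl
  apply max_le_max le_rfl
  have : (j:ℝ) ≤ j' := by exact_mod_cast h
  linarith

lemma clampc_at_zero (n j : ℕ) : clampc n j 0 = 0 := by
  have h1 : (n : ℝ) * ((0:ℝ≥0) : ℝ) - j ≤ 0 := by simp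
  rw [clampc, max_eq_left h1, min_eq_right zero_le_one]

lemma clampc_eq_zero {n j : ℕ} {t : ℝ≥0} (h : (n:ℝ) * t ≤ j) : clampc n j t = 0 := by
  rw [clampc, max_eq_left (by linarith), min_eq_right zero_le_one]

lemma clampc_eq_one {n j : ℕ} {t : ℝ≥0} (h : (j:ℝ) + 1 ≤ (n:ℝ) * t) : clampc n j t = 1 := by
  rw [clampc, min_eq_left]
  exact le_max_of_le_right (by linarith)

lemma clampc_continuous (n j : ℕ) : Continuous (fun t : ℝ≥0 => clampc n j t) :=
  Continuous.min continuous_const <| Continuous.max continuous_const <|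
    ((continuous_const.mul NNReal.continuous_coe).sub continuous_const)

def lamc (n j : ℕ) (t : ℝ≥0) : ℝ := clampc n j t - clampc n (j+1) t

lemma lamc_nonneg (n j : ℕ) (t : ℝ≥0) : 0 ≤ lamc n j t :=
  sub_nonneg.2 (clampc_anti n (Nat.le_succ j) t)

lemma lamc_sum (n m : ℕ) (t : ℝ≥0) :
    ∑ j : Fin m, lamc n (j : ℕ) t = clampc n 0 t - clampc n m t := by
  rw [Fin.sum_univ_eq_sum_range (fun j => lamc n j t) m]
  exact Finset.sum_range_sub' (fun j => clampc n j t) m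

def interpFun (n m : ℕ) (x : Fin m → Ed) (t : ℝ≥0) : Ed :=
  ∑ j : Fin m, lamc n (j : ℕ) t • x j

lemma interpFun_continuous (n m : ℕ) (x : Fin m → Ed) :
    Continuous (fun t => interpFun n m x t) := by
  apply continuous_finset_sum
  intro j _
  exact Continuous.smul ((clampc_continuous n j).sub (clampc_continuous n (j+1))) continuous_const

def interpCM (n m : ℕ) (x : Fin m → Ed) : C(ℝ≥0, Ed) :=
  ⟨fun t => interpFun n m x t, interpFun_continuous n m x⟩

lemma interpCM_at_zero (n m : ℕ) (x : Fin m → Ed) : interpCM n m x 0 = 0 := by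
  show interpFun n m x 0 = 0
  rw [interpFun]
  apply Finset.sum_eq_zero
  intro j _
  rw [lamc, clampc_at_zero, clampc_at_zero, sub_zero, zero_smul]

lemma interp_lip (n m : ℕ) (x y : Fin m → Ed) (t : ℝ≥0) :
    dist (interpCM n m x t) (interpCM n m y t) ≤ ‖x - y‖ := by
  rw [dist_eq_norm]
  show ‖interpFun n m x t - interpFun n m y t‖ ≤ ‖x - y‖
  rw [interpFun, interpFun, ← Finset.sum_sub_distrib]
  have h1 : ∀ j : Fin m, lamc n (j:ℕ) t • x j - lamc n (j:ℕ) t • y j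
      = lamc n (j:ℕ) t • (x j - y j) := fun j => (smul_sub _ _ _).symm
  simp_rw [h1]
  calc ‖∑ j : Fin m, lamc n (j:ℕ) t • (x j - y j)‖
      ≤ ∑ j : Fin m, ‖lamc n (j:ℕ) t • (x j - y j)‖ := norm_sum_le _ _
    _ ≤ ∑ j : Fin m, lamc n (j:ℕ) t * ‖x - y‖ := by
        apply Finset.sum_le_sum
        intro j _
        rw [norm_smul, Real.norm_eq_abs, abs_of_nonneg (lamc_nonneg _ _ _)]
        apply mul_le_mul_of_nonneg_left _ (lamc_nonneg _ _ _)
        calc ‖x j - y j‖ = ‖(x - y) j‖ := rfl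
          _ ≤ ‖x - y‖ := norm_le_pi_norm _ _
    _ = (∑ j : Fin m, lamc n (j:ℕ) t) * ‖x - y‖ := by rw [Finset.sum_mul]
    _ ≤ 1 * ‖x - y‖ := by
        apply mul_le_mul_of_nonneg_right _ (norm_nonneg _)
        rw [lamc_sum]
        have := clampc_le_one n 0 t
        have := clampc_nonneg n m t
        linarith
    _ = ‖x - y‖ := one_mul _

lemma min_one_le_of_lt_one {x c : ℝ} (h : min 1 x ≤ c) (hc : c < 1) : x ≤ c := by
  rcases le_total x 1 with h' | h'
  · rwa [min_eq_right h'] at h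
  · rw [min_eq_left h'] at h; linarith

/-- the nodes `(j+1)/n` -/
def nodeT (n : ℕ) (j : ℕ) : ℝ≥0 := ((j : ℝ≥0) + 1) / (n : ℝ≥0)

lemma nodeT_coe (n : ℕ) (hn : 1 ≤ n) (j : ℕ) : ((nodeT n j : ℝ≥0) : ℝ) = ((j:ℝ) + 1) / n := by
  rw [nodeT, NNReal.coe_div]
  push_cast
  rfl

/-- Main pointwise interpolation error estimate. -/
lemma interp_err {T n : ℕ} (hn : 1 ≤ n) (hTn : T ≤ n) (a : C(ℝ≥0, Ed)) (ha : a 0 = 0)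
    (t : ℝ≥0) (ht : (t : ℝ) ≤ T) :
    min 1 (dist (a t) (interpCM n (n*n) (fun j => a (nodeT n j)) t)) ≤ wtil T n a := by
  have hn0 : (0:ℝ) < n := by exact_mod_cast hn
  have hc0 : 0 ≤ wtil T n a := wtil_nonneg T n a
  have htmem : t ∈ Set.Icc (0:ℝ≥0) ((T:ℝ≥0)+1) := by
    refine ⟨zero_le, ?_⟩
    have : (t:ℝ) ≤ ((T:ℝ≥0):ℝ) + 1 := by push_cast; linarith
    exact_mod_cast this
  -- activity implies closeness of node
  have hactive : ∀ j : Fin (n*n), lamc n (j:ℕ) t ≠ 0 → |(n:ℝ) * t - ((j:ℕ)+1)| < 1 := by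
    intro j hj
    by_contra hcon
    push_neg at hcon
    rcases le_abs.mp hcon with h | h
    · exact hj (by rw [lamc, clampc_eq_one (by linarith), clampc_eq_one (by push_cast; linarith)]; ring)
    · exact hj (by rw [lamc, clampc_eq_zero (by push_cast; linarith), clampc_eq_zero (by push_cast; linarith)]; ring)
  -- active nodes are close to `t`, membership and theta=1
  have hkey : ∀ j : Fin (n*n), lamc n (j:ℕ) t ≠ 0 →
      min 1 (dist (a t) (a (nodeT n (j:ℕ)))) ≤ wtil T n a := by
    intro j hj
    have hclose := hactive j hj
    have hnode_mem : nodeT n (j:ℕ) ∈ Set.Icc (0:ℝ≥0) ((T:ℝ≥0)+1) := by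
      refine ⟨zero_le, ?_⟩
      have h1 : ((nodeT n (j:ℕ) : ℝ≥0) : ℝ) ≤ ((T:ℝ≥0):ℝ) + 1 := by
        rw [nodeT_coe n hn]
        have hclose' := hclose
        rw [abs_lt] at hclose'
        have hTr : ((T:ℝ≥0):ℝ) = (T:ℝ) := by push_cast; ring
        rw [hTr, div_le_iff₀ hn0]
        have hn1 : (1:ℝ) ≤ n := by exact_mod_cast hn
        have hmul : (n:ℝ) * t ≤ (n:ℝ) * T := mul_le_mul_of_nonneg_left ht (le_of_lt hn0)
        nlinarith [hclose'.2]
      exact_mod_cast h1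
    have hθ : theta T n (⟨⟨t, htmem⟩, ⟨nodeT n (j:ℕ), hnode_mem⟩⟩ : PairT T) = 1 := by
      apply theta_eq_one
      show (n:ℝ) * |(t:ℝ) - ((nodeT n (j:ℕ) : ℝ≥0) : ℝ)| ≤ 1
      rw [nodeT_coe n hn]
      have heq : (n:ℝ) * |(t:ℝ) - (((j:ℕ):ℝ)+1)/n| = |(n:ℝ)*t - (((j:ℕ):ℝ)+1)| := by
        rw [← abs_of_pos hn0, ← abs_mul]
        congr 1
        field_simp
        rw [abs_of_pos hn0]
      rw [heq]
      exact le_of_lt hclose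
    have h9 := le_wtil (a := a) (n := n) (⟨⟨t, htmem⟩, ⟨nodeT n (j:ℕ), hnode_mem⟩⟩ : PairT T) hθ
    exact h9
  rcases le_or_gt 1 (wtil T n a) with h1c | h1c
  · exact le_trans (min_le_left _ _) h1c
  -- now wtil T n a < 1
  set m := n * n with hm
  set x := fun j : Fin m => a (nodeT n (j:ℕ)) with hx
  have hSm : clampc n m t = 0 := by
    apply clampc_eq_zero
    have : (n:ℝ) * t ≤ (n:ℝ) * n := by
      have hTn' : (T:ℝ) ≤ n := by exact_mod_cast hTn
      nlinarith
    have hm2 : ((m:ℕ):ℝ) = (n:ℝ) * n := by rw [hm]; push_cast; ring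
    push_cast
    linarith [hm2]
  set S := clampc n 0 t with hS
  have hS0 : 0 ≤ S := clampc_nonneg n 0 t
  have hS1 : S ≤ 1 := clampc_le_one n 0 t
  have hsum : ∑ j : Fin m, lamc n (j:ℕ) t = S := by rw [lamc_sum, hSm, sub_zero]
  -- decomposition
  have hder : a t - interpCM n m x t = (1 - S) • a t + ∑ j : Fin m, lamc n (j:ℕ) t • (a t - x j) := by
    have h2 : ∑ j : Fin m, lamc n (j:ℕ) t • (a t - x j)
        = S • a t - ∑ j : Fin m, lamc n (j:ℕ) t • x j := by
      rw [← hsum, Finset.sum_smul]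
      rw [← Finset.sum_sub_distrib]
      congr 1
      funext j
      rw [smul_sub]
    rw [h2]
    show a t - interpFun n m x t = _
    rw [interpFun, sub_smul, one_smul]
    abel
  -- norm bound
  have hbound1 : ‖(1 - S) • a t‖ ≤ (1 - S) * wtil T n a := by
    rw [norm_smul, Real.norm_eq_abs, abs_of_nonneg (by linarith)]
    rcases eq_or_lt_of_le hS1 with hSeq | hSlt
    · rw [← hSeq]; simp
    · apply mul_le_mul_of_nonneg_left _ (by linarith)
      have h0mem : (0:ℝ≥0) ∈ Set.Icc (0:ℝ≥0) ((T:ℝ≥0)+1) := ⟨le_rfl, zero_le⟩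
      have hθ : theta T n (⟨⟨t, htmem⟩, ⟨0, h0mem⟩⟩ : PairT T) = 1 := by
        apply theta_eq_one
        show (n:ℝ) * |(t:ℝ) - ((0:ℝ≥0):ℝ)| ≤ 1
        have hnt : (n:ℝ) * t < 1 := by
          by_contra hcon
          push_neg at hcon
          have : S = 1 := by
            rw [hS, clampc, min_eq_left]
            apply le_max_of_le_right
            push_cast
            linarith
          linarith
        rw [NNReal.coe_zero, sub_zero, abs_of_nonneg (t.coe_nonneg)]
        linarith
      have := le_wtil (a := a) (n := n) (⟨⟨t, htmem⟩, ⟨0, h0mem⟩⟩ : PairT T) hθ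
      have hdist := min_one_le_of_lt_one this h1c
      calc ‖a t‖ = dist (a t) (a 0) := by rw [ha, dist_eq_norm, sub_zero]
        _ ≤ wtil T n a := hdist
  have hbound2 : ‖∑ j : Fin m, lamc n (j:ℕ) t • (a t - x j)‖ ≤ S * wtil T n a := by
    calc ‖∑ j : Fin m, lamc n (j:ℕ) t • (a t - x j)‖
        ≤ ∑ j : Fin m, ‖lamc n (j:ℕ) t • (a t - x j)‖ := norm_sum_le _ _
      _ ≤ ∑ j : Fin m, lamc n (j:ℕ) t * wtil T n a := by
          apply Finset.sum_le_sum
          intro j _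
          rw [norm_smul, Real.norm_eq_abs, abs_of_nonneg (lamc_nonneg _ _ _)]
          rcases eq_or_ne (lamc n (j:ℕ) t) 0 with h0 | h0
          · rw [h0, zero_mul, zero_mul]
          · apply mul_le_mul_of_nonneg_left _ (lamc_nonneg _ _ _)
            have := hkey j h0
            have hdist := min_one_le_of_lt_one this h1c
            rw [← dist_eq_norm]
            exact hdist
      _ = S * wtil T n a := by rw [← Finset.sum_mul, hsum]
  have htotal : dist (a t) (interpCM n m x t) ≤ wtil T n a := by
    rw [dist_eq_norm, hder]
    calc ‖(1 - S) • a t + ∑ j : Fin m, lamc n (j:ℕ) t • (a t - x j)‖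
        ≤ ‖(1 - S) • a t‖ + ‖∑ j : Fin m, lamc n (j:ℕ) t • (a t - x j)‖ := norm_add_le _ _
      _ ≤ (1 - S) * wtil T n a + S * wtil T n a := add_le_add hbound1 hbound2
      _ = wtil T n a := by ring
  exact le_trans (min_le_right _ _) htotal

/-- The interpolation is `ρ`-close to the path. -/
lemma rho_interp_le {T n : ℕ} (hn : 1 ≤ n) (hTn : T ≤ n) (a : C(ℝ≥0, Ed)) (ha : a 0 = 0) :
    rho a (interpCM n (n*n) (fun j => a (nodeT n j))) ≤ wtil T n a + (1/2:ℝ)^T := by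
  set J := interpCM n (n*n) (fun j => a (nodeT n j)) with hJ
  have hc0 : 0 ≤ wtil T n a := wtil_nonneg T n a
  calc rho a J ≤ (∑ i ∈ Finset.range T, (1/2:ℝ)^(i+1) * min 1 (pathDist (i+1) a J))
        + (1/2:ℝ)^T := rho_le_head_tail a J T
    _ ≤ (∑ i ∈ Finset.range T, (1/2:ℝ)^(i+1) * wtil T n a) + (1/2:ℝ)^T := by
        gcongr with i hi
        rw [Finset.mem_range] at hi
        rcases le_or_gt 1 (wtil T n a) with h1c | h1c
        · exact le_trans (min_le_left _ _) h1c
        · have hpd : pathDist (i+1) a J ≤ wtil T n a := by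
            apply pathDist_le hc0
            intro s hs
            have hs' : (s : ℝ) ≤ T := by
              have h1 : (s:ℝ) ≤ ((i+1 : ℕ):ℝ≥0) := by exact_mod_cast hs
              have h2 : ((i+1:ℕ):ℝ) ≤ T := by exact_mod_cast hi
              push_cast at h1 h2 ⊢
              linarith
            have := interp_err hn hTn a ha s hs'
            exact min_one_le_of_lt_one this h1c
          exact le_trans (min_le_right _ _) hpd
    _ ≤ 1 * wtil T n a + (1/2:ℝ)^T := by
        apply add_le_add_left
        rw [← Finset.sum_mul]
        apply mul_le_mul_of_nonneg_right _ hc0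
        calc ∑ i ∈ Finset.range T, (1/2:ℝ)^(i+1)
            ≤ ∑' i : ℕ, (1/2:ℝ)^(i+1) := Summable.sum_le_tsum _ (fun i _ => by positivity) summable_half_pow
          _ = 1 := tsum_half_pow
    _ = wtil T n a + (1/2:ℝ)^T := by rw [one_mul]

/-- `ρ`-Lipschitz property of interpolation in the sample points. -/
lemma rho_interp_lip (n m : ℕ) (x y : Fin m → Ed) :
    rho (interpCM n m x) (interpCM n m y) ≤ ‖x - y‖ := by
  calc rho (interpCM n m x) (interpCM n m y)
      ≤ ∑' i : ℕ, (1/2:ℝ)^(i+1) * ‖x - y‖ := by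
        apply Summable.tsum_le_tsum _ (rho_summable _ _) (summable_half_pow.mul_right _)
        intro i
        apply mul_le_mul_of_nonneg_left _ (by positivity)
        refine le_trans (min_le_right _ _) (pathDist_le (norm_nonneg _) ?_)
        intro t _
        exact interp_lip n m x y t
    _ = 1 * ‖x - y‖ := by rw [tsum_mul_right, tsum_half_pow]
    _ = ‖x - y‖ := one_mul _
/-! ### Omega-level facts and the inf-convolution -/

def rhoO {d : ℕ} (ω₁ ω₂ : OmegaC d) : ℝ := rho ω₁.1 ω₂.1

lemma rhoO_nonneg {d : ℕ} (ω₁ ω₂ : OmegaC d) : 0 ≤ rhoO ω₁ ω₂ := rho_nonneg _ _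
lemma rhoO_self {d : ℕ} (ω : OmegaC d) : rhoO ω ω = 0 := rho_self _
lemma rhoO_comm {d : ℕ} (ω₁ ω₂ : OmegaC d) : rhoO ω₁ ω₂ = rhoO ω₂ ω₁ := rho_comm _ _
lemma rhoO_triangle {d : ℕ} (ω₁ ω₂ ω₃ : OmegaC d) : rhoO ω₁ ω₃ ≤ rhoO ω₁ ω₂ + rhoO ω₂ ω₃ :=
  rho_triangle _ _ _

lemma rhoO_continuous {d : ℕ} (ω : OmegaC d) : Continuous (fun ω' : OmegaC d => rhoO ω ω') :=
  (rho_continuous ω.1).comp continuous_subtype_val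

def omega0 (d : ℕ) : OmegaC d := ⟨0, rfl⟩

instance (d : ℕ) : Nonempty (OmegaC d) := ⟨omega0 d⟩

/-- `ρ`-continuity of a continuous function at a point. -/
lemma rho_continuity_pt {d : ℕ} {Y : OmegaC d → ℝ} (hY : Continuous Y) (ω : OmegaC d)
    {ε : ℝ} (hε : 0 < ε) :
    ∃ δ : ℝ, 0 < δ ∧ ∀ ω' : OmegaC d, rhoO ω ω' < δ → |Y ω' - Y ω| ≤ ε := by
  by_contra hcon
  push_neg at hcon
  have hch : ∀ k : ℕ, ∃ ω' : OmegaC d, rhoO ω ω' < (1/2:ℝ)^k ∧ ε < |Y ω' - Y ω| := by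
    intro k
    obtain ⟨ω', h1, h2⟩ := hcon ((1/2:ℝ)^k) (by positivity)
    exact ⟨ω', h1, h2⟩
  choose g hg1 hg2 using hch
  have hgt : Tendsto g atTop (𝓝 ω) := by
    refine tendsto_subtype_rng.mpr ?_
    rw [ContinuousMap.tendsto_compactOpen_iff_forall]
    intro K hK
    obtain ⟨u, hu⟩ := hK.bddAbove
    obtain ⟨i, hi⟩ := exists_nat_ge u
    haveI : CompactSpace K := isCompact_iff_compactSpace.mp hK
    rw [tendsto_iff_dist_tendsto_zero]
    have h2k : Tendsto (fun k : ℕ => 2^(i+1) * (1/2:ℝ)^k) atTop (𝓝 0) := by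
      have := tendsto_pow_atTop_nhds_zero_of_lt_one (r := (1/2:ℝ)) (by norm_num) (by norm_num)
      simpa using this.const_mul (2^(i+1) : ℝ)
    have hDe : ∀ᶠ k in atTop, dist ((g k).1.restrict K) (ω.1.restrict K)
        ≤ 2^(i+1) * (1/2:ℝ)^k := by
      have hev : ∀ᶠ k in atTop, 2^(i+1) * (1/2:ℝ)^k < 1 :=
        h2k.eventually_lt_const (by norm_num)
      filter_upwards [hev] with k hk
      have hterm := rho_term_le_rho ω.1 (g k).1 i
      have hrk := hg1 k
      rw [rhoO] at hrk
      have hmin : min 1 (pathDist (i+1) ω.1 (g k).1) ≤ 2^(i+1) * (1/2:ℝ)^k := by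
        have hpow : (0:ℝ) < (1/2:ℝ)^(i+1) := by positivity
        have h3 : (1/2:ℝ)^(i+1) * min 1 (pathDist (i+1) ω.1 (g k).1) < (1/2:ℝ)^k :=
          lt_of_le_of_lt hterm hrk
        have h4 : min 1 (pathDist (i+1) ω.1 (g k).1) < (1/2:ℝ)^k / (1/2:ℝ)^(i+1) := by
          rw [lt_div_iff₀ hpow, mul_comm]
          exact h3
        have h5 : (1/2:ℝ)^k / (1/2:ℝ)^(i+1) = 2^(i+1) * (1/2:ℝ)^k := by
          rw [div_eq_mul_inv, ← inv_pow]
          norm_num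
          ring
        rw [h5] at h4
        exact le_of_lt h4
      have hpd : pathDist (i+1) ω.1 (g k).1 ≤ 2^(i+1) * (1/2:ℝ)^k := by
        rcases le_total (pathDist (i+1) ω.1 (g k).1) 1 with h | h
        · rwa [min_eq_right h] at hmin
        · rw [min_eq_left h] at hmin; linarith
      refine le_trans ?_ hpd
      rw [ContinuousMap.dist_le (pathDist_nonneg _ _ _)]
      rintro ⟨x, hx⟩
      simp only [ContinuousMap.restrict_apply]
      rw [dist_comm]
      apply pathDist_apply_le
      have h6 : x ≤ u := hu hx
      have h7 : u ≤ (i : ℝ≥0) := hi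
      have h8 : (i : ℝ≥0) ≤ ((i+1 : ℕ) : ℝ≥0) := by exact_mod_cast Nat.le_succ i
      exact le_trans h6 (le_trans h7 h8)
    exact squeeze_zero' (Eventually.of_forall (fun k => dist_nonneg)) hDe h2k
  have hYt : Tendsto (fun k => Y (g k)) atTop (𝓝 (Y ω)) := (hY.tendsto ω).comp hgt
  obtain ⟨N, hN⟩ := Metric.tendsto_atTop.mp hYt ε hε
  have h9 := hN N le_rfl
  rw [Real.dist_eq] at h9
  exact absurd h9 (not_lt.mpr (le_of_lt (hg2 N)))

/-! ### Inf-convolution -/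

def infConv {d : ℕ} (Y : OmegaC d → ℝ) (L : ℕ) (ω : OmegaC d) : ℝ :=
  sInf (Set.range fun ω' : OmegaC d => Y ω' + L * rhoO ω ω')

section InfConv

variable {d : ℕ} {Y : OmegaC d → ℝ} {M : ℝ} (hM : ∀ ω, |Y ω| ≤ M)

include hM

lemma infConv_bddBelow (L : ℕ) (ω : OmegaC d) :
    BddBelow (Set.range fun ω' : OmegaC d => Y ω' + L * rhoO ω ω') := by
  refine ⟨-M, ?_⟩
  rintro y ⟨ω', rfl⟩
  beta_reduce
  have h1 := (abs_le.mp (hM ω')).1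
  have h2 : 0 ≤ (L:ℝ) * rhoO ω ω' := mul_nonneg (by positivity) (rhoO_nonneg _ _)
  linarith

lemma infConv_le_self (L : ℕ) (ω : OmegaC d) : infConv Y L ω ≤ Y ω := by
  have h : (fun ω' : OmegaC d => Y ω' + L * rhoO ω ω') ω = Y ω := by
    simp [rhoO_self]
  have h2 := csInf_le (infConv_bddBelow hM L ω)
    (Set.mem_range_self (f := fun ω' : OmegaC d => Y ω' + L * rhoO ω ω') ω)
  rw [infConv]
  simpa [rhoO_self] using h2

lemma neg_le_infConv (L : ℕ) (ω : OmegaC d) : -M ≤ infConv Y L ω := by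
  apply le_csInf (Set.range_nonempty _)
  rintro y ⟨ω', rfl⟩
  beta_reduce
  have h1 := (abs_le.mp (hM ω')).1
  have h2 : 0 ≤ (L:ℝ) * rhoO ω ω' := mul_nonneg (by positivity) (rhoO_nonneg _ _)
  linarith

lemma infConv_abs_le (L : ℕ) (ω : OmegaC d) (hM0 : 0 ≤ M) : |infConv Y L ω| ≤ M := by
  rw [abs_le]
  constructor
  · exact neg_le_infConv hM L ω
  · exact le_trans (infConv_le_self hM L ω) (le_trans (le_abs_self _) (hM ω))

lemma infConv_mono {L L' : ℕ} (h : L ≤ L') (ω : OmegaC d) : infConv Y L ω ≤ infConv Y L' ω := by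
  apply le_csInf (Set.range_nonempty _)
  rintro y ⟨ω', rfl⟩
  beta_reduce
  refine le_trans (csInf_le (infConv_bddBelow hM L ω) ⟨ω', rfl⟩) ?_
  beta_reduce
  have : (L:ℝ) ≤ L' := by exact_mod_cast h
  have h2 : 0 ≤ rhoO ω ω' := rhoO_nonneg _ _
  nlinarith

lemma infConv_lip (L : ℕ) (ω₁ ω₂ : OmegaC d) :
    infConv Y L ω₁ ≤ infConv Y L ω₂ + L * rhoO ω₁ ω₂ := by
  rw [← sub_le_iff_le_add]
  apply le_csInf (Set.range_nonempty _)
  rintro y ⟨ω', rfl⟩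
  beta_reduce
  rw [sub_le_iff_le_add]
  refine le_trans (csInf_le (infConv_bddBelow hM L ω₁) ⟨ω', rfl⟩) ?_
  beta_reduce
  have htri := rhoO_triangle ω₁ ω₂ ω'
  have hL : (0:ℝ) ≤ L := by positivity
  nlinarith [rhoO_comm ω₁ ω₂]

lemma infConv_abs_sub_le (L : ℕ) (ω₁ ω₂ : OmegaC d) :
    |infConv Y L ω₁ - infConv Y L ω₂| ≤ L * rhoO ω₁ ω₂ := by
  rw [abs_sub_le_iff]
  constructor
  · have := infConv_lip hM L ω₁ ω₂; linarith
  · have := infConv_lip hM L ω₂ ω₁; rw [rhoO_comm ω₂ ω₁] at this; linarith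

lemma infConv_continuous (L : ℕ) : Continuous (infConv Y L) := by
  rw [continuous_iff_continuousAt]
  intro ω₀
  rw [ContinuousAt, tendsto_iff_dist_tendsto_zero]
  have hg : Tendsto (fun ω : OmegaC d => (L:ℝ) * rhoO ω₀ ω) (𝓝 ω₀) (𝓝 0) := by
    have h1 : Continuous (fun ω : OmegaC d => (L:ℝ) * rhoO ω₀ ω) :=
      continuous_const.mul (rhoO_continuous ω₀)
    have h2 := h1.tendsto ω₀
    rw [rhoO_self, mul_zero] at h2
    exact h2
  apply squeeze_zero (fun ω => dist_nonneg) _ hg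
  intro ω
  rw [Real.dist_eq]
  have := infConv_abs_sub_le hM L ω ω₀
  rw [rhoO_comm ω ω₀] at this
  exact this

lemma infConv_tendsto (hY : Continuous Y) (ω : OmegaC d) :
    Tendsto (fun L : ℕ => infConv Y L ω) atTop (𝓝 (Y ω)) := by
  rw [Metric.tendsto_atTop]
  intro ε hε
  obtain ⟨δ, hδ, hδ'⟩ := rho_continuity_pt hY ω (half_pos hε)
  obtain ⟨N, hN⟩ := exists_nat_gt (2 * M / δ)
  refine ⟨N, fun L hL => ?_⟩
  have hub : infConv Y L ω ≤ Y ω := infConv_le_self hM L ω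
  have hlb : Y ω - ε/2 ≤ infConv Y L ω := by
    apply le_csInf (Set.range_nonempty _)
    rintro y ⟨ω', rfl⟩
    beta_reduce
    rcases lt_or_ge (rhoO ω ω') δ with h | h
    · have h1 := hδ' ω' h
      have h2 := (abs_le.mp h1).1
      have h3 : 0 ≤ (L:ℝ) * rhoO ω ω' := mul_nonneg (by positivity) (rhoO_nonneg _ _)
      linarith
    · have h1 : 2 * M / δ < (L:ℝ) := lt_of_lt_of_le hN (by exact_mod_cast hL)
      have h2 : 2 * M ≤ (L:ℝ) * rhoO ω ω' := by
        rw [div_lt_iff₀ hδ] at h1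
        calc 2 * M ≤ (L:ℝ) * δ := le_of_lt h1
          _ ≤ (L:ℝ) * rhoO ω ω' := by
              apply mul_le_mul_of_nonneg_left h (by positivity)
      have h3 := (abs_le.mp (hM ω')).1
      have h4 := (abs_le.mp (hM ω)).2
      linarith
  rw [Real.dist_eq, abs_lt]
  constructor <;> linarith

end InfConv
/-! ### Dini-type argument on the compact family of measures -/

lemma dini_lintegral {X : Type*} [TopologicalSpace X] [MeasurableSpace X] [OpensMeasurableSpace X]
    {K : Set (ProbabilityMeasure X)} (hK : IsCompact K)
    (g : ℕ → (BoundedContinuousFunction X ℝ≥0))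
    (hanti : ∀ m n : ℕ, m ≤ n → ∀ x, g n x ≤ g m x)
    (hlim : ∀ p ∈ K, Tendsto (fun n => ∫⁻ x, (g n x : ℝ≥0∞) ∂(p : Measure X)) atTop (𝓝 0))
    {ε : ℝ≥0∞} (hε : 0 < ε) :
    ∃ n : ℕ, ∀ p ∈ K, ∫⁻ x, (g n x : ℝ≥0∞) ∂(p : Measure X) < ε := by
  set Φ : ℕ → ProbabilityMeasure X → ℝ≥0∞ :=
    fun n p => ∫⁻ x, (g n x : ℝ≥0∞) ∂(p : Measure X) with hΦ
  have hcont : ∀ n, Continuous (Φ n) := by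
    intro n
    rw [continuous_iff_continuousAt]
    intro p₀
    exact MeasureTheory.ProbabilityMeasure.tendsto_iff_forall_lintegral_tendsto.mp
      tendsto_id (g n)
  have hU : ∀ n, IsOpen {p : ProbabilityMeasure X | Φ n p < ε} := by
    intro n
    have : {p : ProbabilityMeasure X | Φ n p < ε} = (Φ n) ⁻¹' (Set.Iio ε) := rfl
    rw [this]
    exact (hcont n).isOpen_preimage _ isOpen_Iio
  have hcover : K ⊆ ⋃ n, {p : ProbabilityMeasure X | Φ n p < ε} := by
    intro p hp
    obtain ⟨n, hn⟩ := ((hlim p hp).eventually_lt_const hε).exists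
    exact Set.mem_iUnion.mpr ⟨n, hn⟩
  obtain ⟨I, hI⟩ := hK.elim_finite_subcover _ hU hcover
  refine ⟨I.sup id, fun p hp => ?_⟩
  have hmem := hI hp
  simp only [Set.mem_iUnion, exists_prop] at hmem
  obtain ⟨n, hnI, hlt⟩ := hmem
  have hle : Φ (I.sup id) p ≤ Φ n p := by
    apply lintegral_mono
    intro x
    exact ENNReal.coe_le_coe.mpr (hanti n (I.sup id) (Finset.le_sup (f := id) hnI) x)
  exact lt_of_le_of_lt hle hlt

/-! ### Step A : uniform approximation by the inf-convolution -/

lemma stepA {d : ℕ} {P : Set (ProbabilityMeasure (OmegaC d))} (hcomp : IsCompact P)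
    {Y : OmegaC d → ℝ} (hY : Continuous Y) {M : ℝ} (hM : ∀ ω, |Y ω| ≤ M)
    {ε : ℝ} (hε : 0 < ε) :
    ∃ L : ℕ, ∀ p ∈ P, ∫⁻ ω, ENNReal.ofReal (Y ω - infConv Y L ω)
      ∂(p : Measure (OmegaC d)) ≤ ENNReal.ofReal ε := by
  have hM0 : 0 ≤ M := le_trans (abs_nonneg _) (hM (omega0 d))
  have hcontL : ∀ L : ℕ, Continuous (fun ω => Y ω - infConv Y L ω) :=
    fun L => hY.sub (infConv_continuous hM L)
  have hbddL : ∀ (L : ℕ) (ω : OmegaC d), ‖Y ω - infConv Y L ω‖ ≤ 2*M := by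
    intro L ω
    rw [Real.norm_eq_abs]
    have h1 := hM ω
    have h2 := infConv_abs_le hM L ω hM0
    rw [abs_le] at h1 h2 ⊢
    constructor <;> [linarith [h1.1, h2.2]; linarith [h1.2, h2.1]]
  set g : ℕ → BoundedContinuousFunction (OmegaC d) ℝ≥0 := fun L =>
    (BoundedContinuousFunction.ofNormedAddCommGroup _ (hcontL L) (2*M) (hbddL L)).nnrealPart
    with hg
  have hgcoe : ∀ (L : ℕ) (ω : OmegaC d),
      (g L ω : ℝ≥0∞) = ENNReal.ofReal (Y ω - infConv Y L ω) := by
    intro L ω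
    rfl
  have hanti : ∀ m n : ℕ, m ≤ n → ∀ ω, g n ω ≤ g m ω := by
    intro m n hmn ω
    apply Real.toNNReal_mono
    have := infConv_mono hM hmn ω
    simp only [BoundedContinuousFunction.coe_ofNormedAddCommGroup]
    linarith
  have hlim : ∀ p ∈ P, Tendsto (fun L => ∫⁻ ω, (g L ω : ℝ≥0∞) ∂(p : Measure (OmegaC d)))
      atTop (𝓝 0) := by
    intro p _
    set F : ℕ → OmegaC d → ℝ≥0∞ := fun L ω => ENNReal.ofReal (Y ω - infConv Y L ω) with hF
    have hFmeas : ∀ L, Measurable (F L) := fun L => (hcontL L).measurable.ennreal_ofReal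
    have hFanti : Antitone F := by
      intro m n hmn ω
      apply ENNReal.ofReal_le_ofReal
      have := infConv_mono hM hmn ω
      linarith
    have hFpt : ∀ ω, (⨅ L, F L ω) = 0 := by
      intro ω
      have h1 : Tendsto (fun L => F L ω) atTop (𝓝 (⨅ L, F L ω)) :=
        tendsto_atTop_iInf (fun m n hmn => hFanti hmn ω)
      have h2 : Tendsto (fun L => F L ω) atTop (𝓝 0) := by
        have h3 : Tendsto (fun L : ℕ => Y ω - infConv Y L ω) atTop (𝓝 0) := by
          have := (tendsto_const_nhds (x := Y ω) (f := atTop (α := ℕ))).sub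
            (infConv_tendsto hM hY ω)
          simpa using this
        have h4 := (ENNReal.continuous_ofReal.tendsto 0).comp h3
        simpa [hF, Function.comp_def] using h4
      exact tendsto_nhds_unique h1 h2
    have hIanti : Antitone (fun L => ∫⁻ ω, F L ω ∂(p : Measure (OmegaC d))) :=
      fun m n hmn => lintegral_mono (hFanti hmn)
    have h5 : Tendsto (fun L => ∫⁻ ω, F L ω ∂(p : Measure (OmegaC d))) atTop
        (𝓝 (⨅ L, ∫⁻ ω, F L ω ∂(p : Measure (OmegaC d)))) := tendsto_atTop_iInf hIanti
    have h6 : (⨅ L, ∫⁻ ω, F L ω ∂(p : Measure (OmegaC d))) = 0 := by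
      have hfin : ∫⁻ ω, F 0 ω ∂(p : Measure (OmegaC d)) ≠ ∞ := by
        apply ne_of_lt
        calc ∫⁻ ω, F 0 ω ∂(p : Measure (OmegaC d))
            ≤ ∫⁻ _, ENNReal.ofReal (2*M) ∂(p : Measure (OmegaC d)) := by
              apply lintegral_mono
              intro ω
              apply ENNReal.ofReal_le_ofReal
              have := hbddL 0 ω
              rw [Real.norm_eq_abs, abs_le] at this
              exact this.2
          _ = ENNReal.ofReal (2*M) := by
              rw [lintegral_const, measure_univ, mul_one]
          _ < ∞ := ENNReal.ofReal_lt_top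
      rw [← lintegral_iInf hFmeas hFanti hfin]
      have hz : (fun ω => ⨅ L, F L ω) = (fun _ => (0:ℝ≥0∞)) := funext hFpt
      rw [hz, lintegral_zero]
    rw [h6] at h5
    have heq : (fun L => ∫⁻ ω, (g L ω : ℝ≥0∞) ∂(p : Measure (OmegaC d)))
        = (fun L => ∫⁻ ω, F L ω ∂(p : Measure (OmegaC d))) := rfl
    rw [heq]
    exact h5
  obtain ⟨L, hL⟩ := dini_lintegral hcomp g hanti hlim (ENNReal.ofReal_pos.mpr hε)
  refine ⟨L, fun p hp => ?_⟩
  have := le_of_lt (hL p hp)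
  have heq : ∫⁻ ω, (g L ω : ℝ≥0∞) ∂(p : Measure (OmegaC d))
      = ∫⁻ ω, ENNReal.ofReal (Y ω - infConv Y L ω) ∂(p : Measure (OmegaC d)) := rfl
  rwa [heq] at this

/-! ### Step B : uniform smallness of the modulus -/

lemma stepB {d : ℕ} {P : Set (ProbabilityMeasure (OmegaC d))} (hcomp : IsCompact P)
    (T : ℕ) {ε : ℝ} (hε : 0 < ε) :
    ∃ n : ℕ, (1 ≤ n ∧ T ≤ n) ∧ ∀ p ∈ P, ∫⁻ ω : OmegaC d, ENNReal.ofReal (wtil T n ω.1)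
      ∂(p : Measure (OmegaC d)) ≤ ENNReal.ofReal ε := by
  have hwcont : ∀ n : ℕ, Continuous (fun ω : OmegaC d => wtil T n ω.1) :=
    fun n => (wtil_continuous T n).comp continuous_subtype_val
  have hwbdd : ∀ (n : ℕ) (ω : OmegaC d), ‖wtil T n ω.1‖ ≤ 1 := by
    intro n ω
    rw [Real.norm_eq_abs, abs_of_nonneg (wtil_nonneg _ _ _)]
    exact wtil_le_one _ _ _
  set g : ℕ → BoundedContinuousFunction (OmegaC d) ℝ≥0 := fun n =>
    (BoundedContinuousFunction.ofNormedAddCommGroup _ (hwcont n) 1 (hwbdd n)).nnrealPart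
    with hg
  have hgcoe : ∀ (n : ℕ) (ω : OmegaC d), (g n ω : ℝ≥0∞) = ENNReal.ofReal (wtil T n ω.1) := by
    intro n ω
    rfl
  have hanti : ∀ m n : ℕ, m ≤ n → ∀ ω, g n ω ≤ g m ω := by
    intro m n hmn ω
    apply Real.toNNReal_mono
    simpa using wtil_anti T hmn ω.1
  have hlim : ∀ p ∈ P, Tendsto (fun n => ∫⁻ ω, (g n ω : ℝ≥0∞) ∂(p : Measure (OmegaC d)))
      atTop (𝓝 0) := by
    intro p _
    set F : ℕ → OmegaC d → ℝ≥0∞ := fun n ω => ENNReal.ofReal (wtil T n ω.1) with hF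
    have hFmeas : ∀ n, Measurable (F n) := fun n => (hwcont n).measurable.ennreal_ofReal
    have hFanti : Antitone F := fun m n hmn ω =>
      ENNReal.ofReal_le_ofReal (wtil_anti T hmn ω.1)
    have hFpt : ∀ ω, (⨅ n, F n ω) = 0 := by
      intro ω
      have h1 : Tendsto (fun n => F n ω) atTop (𝓝 (⨅ n, F n ω)) :=
        tendsto_atTop_iInf (fun m n hmn => hFanti hmn ω)
      have h2 : Tendsto (fun n => F n ω) atTop (𝓝 0) := by
        have h4 := (ENNReal.continuous_ofReal.tendsto 0).comp (wtil_tendsto_zero T ω.1)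
        simpa [hF, Function.comp_def] using h4
      exact tendsto_nhds_unique h1 h2
    have hIanti : Antitone (fun n => ∫⁻ ω, F n ω ∂(p : Measure (OmegaC d))) :=
      fun m n hmn => lintegral_mono (hFanti hmn)
    have h5 : Tendsto (fun n => ∫⁻ ω, F n ω ∂(p : Measure (OmegaC d))) atTop
        (𝓝 (⨅ n, ∫⁻ ω, F n ω ∂(p : Measure (OmegaC d)))) := tendsto_atTop_iInf hIanti
    have h6 : (⨅ n, ∫⁻ ω, F n ω ∂(p : Measure (OmegaC d))) = 0 := by
      have hfin : ∫⁻ ω, F 0 ω ∂(p : Measure (OmegaC d)) ≠ ∞ := by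
        apply ne_of_lt
        calc ∫⁻ ω, F 0 ω ∂(p : Measure (OmegaC d))
            ≤ ∫⁻ _, ENNReal.ofReal 1 ∂(p : Measure (OmegaC d)) := by
              apply lintegral_mono
              intro ω
              exact ENNReal.ofReal_le_ofReal (wtil_le_one _ _ _)
          _ = ENNReal.ofReal 1 := by rw [lintegral_const, measure_univ, mul_one]
          _ < ∞ := ENNReal.ofReal_lt_top
      rw [← lintegral_iInf hFmeas hFanti hfin]
      have hz : (fun ω => ⨅ n, F n ω) = (fun _ => (0:ℝ≥0∞)) := funext hFpt
      rw [hz, lintegral_zero]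
    rw [h6] at h5
    have heq : (fun n => ∫⁻ ω, (g n ω : ℝ≥0∞) ∂(p : Measure (OmegaC d)))
        = (fun n => ∫⁻ ω, F n ω ∂(p : Measure (OmegaC d))) := rfl
    rw [heq]
    exact h5
  obtain ⟨n₀, hn₀⟩ := dini_lintegral hcomp g hanti hlim (ENNReal.ofReal_pos.mpr hε)
  refine ⟨max n₀ (max 1 T), ⟨le_trans (le_max_left _ _) (le_max_right _ _),
    le_trans (le_max_right _ _) (le_max_right _ _)⟩, fun p hp => ?_⟩
  have h1 : ∫⁻ ω, (g (max n₀ (max 1 T)) ω : ℝ≥0∞) ∂(p : Measure (OmegaC d))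
      ≤ ∫⁻ ω, (g n₀ ω : ℝ≥0∞) ∂(p : Measure (OmegaC d)) := by
    apply lintegral_mono
    intro ω
    exact ENNReal.coe_le_coe.mpr (hanti n₀ _ (le_max_left _ _) ω)
  have h2 := le_of_lt (hn₀ p hp)
  have heq : ∫⁻ ω, (g (max n₀ (max 1 T)) ω : ℝ≥0∞) ∂(p : Measure (OmegaC d))
      = ∫⁻ ω, ENNReal.ofReal (wtil T (max n₀ (max 1 T)) ω.1) ∂(p : Measure (OmegaC d)) := rfl
  rw [← heq]
  exact le_trans h1 h2
/-! ### Every bounded continuous function is `d`-approximable by `LipCyl` -/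

lemma cb_approx {d : ℕ} {P : Set (ProbabilityMeasure (OmegaC d))} (hcomp : IsCompact P)
    {Y : OmegaC d → ℝ} (hY : Continuous Y) {M : ℝ} (hM : ∀ ω, |Y ω| ≤ M)
    {ε : ℝ} (hε : 0 < ε) :
    ∃ Z ∈ LipCyl d, ∀ p ∈ P, ∫⁻ ω, ENNReal.ofReal |Y ω - Z ω| ∂(p : Measure (OmegaC d))
      ≤ ENNReal.ofReal ε := by
  obtain ⟨L, hL⟩ := stepA hcomp hY hM (ε := ε/3) (by linarith)
  have hL0 : (0:ℝ) ≤ L := by positivity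
  obtain ⟨T, hT⟩ := exists_pow_lt_of_lt_one (show (0:ℝ) < ε/(3*(L+1)) by positivity)
    (show (1/2:ℝ) < 1 by norm_num)
  obtain ⟨n, ⟨hn1, hnT⟩, hB⟩ := stepB hcomp T (ε := ε/(3*(L+1))) (by positivity)
  have hn0 : (0:ℝ) < n := by exact_mod_cast hn1
  set m := n*n with hm
  have hmap0 : ∀ (x : Fin m → EuclideanSpace ℝ (Fin d)), (interpCM n m x) 0 = 0 :=
    fun x => interpCM_at_zero n m x
  set φ : (Fin m → EuclideanSpace ℝ (Fin d)) → ℝ :=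
    fun x => infConv Y L ⟨interpCM n m x, hmap0 x⟩ with hφ
  set J : OmegaC d → OmegaC d := fun ω => ⟨interpCM n m (fun j => ω.1 (nodeT n (j:ℕ))),
    hmap0 _⟩ with hJ
  set Z : OmegaC d → ℝ := fun ω => φ (fun j => ω.1 (nodeT n (j:ℕ))) with hZdef
  have hZJ : ∀ ω, Z ω = infConv Y L (J ω) := fun ω => rfl
  have hφlip : ∀ x y, |φ x - φ y| ≤ (L:ℝ) * ‖x - y‖ := by
    intro x y
    have h1 := infConv_abs_sub_le hM L ⟨interpCM n m x, hmap0 x⟩ ⟨interpCM n m y, hmap0 y⟩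
    refine le_trans h1 ?_
    apply mul_le_mul_of_nonneg_left _ hL0
    have h2 : rhoO (⟨interpCM n m x, hmap0 x⟩ : OmegaC d) ⟨interpCM n m y, hmap0 y⟩
        = rho (interpCM n m x) (interpCM n m y) := rfl
    rw [h2]
    exact rho_interp_lip n m x y
  have hZmem : Z ∈ LipCyl d := by
    refine ⟨m, fun j => nodeT n (j:ℕ), φ, ?_, ?_, ?_, fun ω => rfl⟩
    · calc 1 = 1*1 := (one_mul 1).symm
        _ ≤ n*n := Nat.mul_le_mul hn1 hn1
    · intro j j' hjj
      rw [← NNReal.coe_lt_coe, nodeT_coe n hn1, nodeT_coe n hn1]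
      have hjj' : ((j:ℕ):ℝ) < ((j':ℕ):ℝ) := by exact_mod_cast hjj
      rw [div_lt_div_iff₀ hn0 hn0]
      nlinarith
    · refine ⟨?_, (L:ℝ), 0, hL0, ?_⟩
      · have hlw : LipschitzWith (Real.toNNReal L) φ := by
          apply LipschitzWith.of_dist_le_mul
          intro x y
          rw [Real.dist_eq, dist_eq_norm]
          refine le_trans (hφlip x y) ?_
          apply mul_le_mul_of_nonneg_right _ (norm_nonneg _)
          rw [Real.coe_toNNReal _ hL0]
        exact hlw.continuous
      · intro x y
        refine le_trans (hφlip x y) ?_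
        apply mul_le_mul_of_nonneg_right _ (norm_nonneg _)
        have h30 : (1:ℝ) + ‖x‖^0 + ‖y‖^0 = 3 := by norm_num
        rw [h30]
        linarith
  refine ⟨Z, hZmem, fun p hp => ?_⟩
  have hpt : ∀ ω : OmegaC d, |Y ω - Z ω| ≤ (Y ω - infConv Y L ω)
      + ((L:ℝ) * wtil T n ω.1 + (L:ℝ)*(1/2:ℝ)^T) := by
    intro ω
    have h1 : |Y ω - Z ω| ≤ |Y ω - infConv Y L ω| + |infConv Y L ω - Z ω| := abs_sub_le _ _ _
    have h2 : |Y ω - infConv Y L ω| = Y ω - infConv Y L ω :=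
      abs_of_nonneg (by linarith [infConv_le_self hM L ω])
    have h3 : |infConv Y L ω - Z ω| ≤ (L:ℝ) * rhoO ω (J ω) := by
      rw [hZJ ω]; exact infConv_abs_sub_le hM L ω (J ω)
    have h4 : rhoO ω (J ω) ≤ wtil T n ω.1 + (1/2:ℝ)^T := rho_interp_le hn1 hnT ω.1 ω.2
    have h5 : (L:ℝ) * rhoO ω (J ω) ≤ (L:ℝ)*wtil T n ω.1 + (L:ℝ)*(1/2)^T := by nlinarith
    linarith
  have hmeas1 : Measurable fun ω : OmegaC d => ENNReal.ofReal (Y ω - infConv Y L ω) :=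
    ((hY.sub (infConv_continuous hM L)).measurable).ennreal_ofReal
  have hwcont : Continuous fun ω : OmegaC d => wtil T n ω.1 :=
    (wtil_continuous T n).comp continuous_subtype_val
  have hwmeas : Measurable fun ω : OmegaC d => ENNReal.ofReal (wtil T n ω.1) :=
    (hwcont.measurable).ennreal_ofReal
  have hmeas2 : Measurable fun ω : OmegaC d => ENNReal.ofReal ((L:ℝ) * wtil T n ω.1) :=
    ((continuous_const.mul hwcont).measurable).ennreal_ofReal
  have hethird : (0:ℝ) ≤ ε/3 := by linarith
  calc ∫⁻ ω, ENNReal.ofReal |Y ω - Z ω| ∂(p : Measure (OmegaC d))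
      ≤ ∫⁻ ω, (ENNReal.ofReal (Y ω - infConv Y L ω)
          + (ENNReal.ofReal ((L:ℝ) * wtil T n ω.1) + ENNReal.ofReal ((L:ℝ)*(1/2:ℝ)^T)))
          ∂(p : Measure (OmegaC d)) := by
        apply lintegral_mono
        intro ω
        refine le_trans (ENNReal.ofReal_le_ofReal (hpt ω)) ?_
        refine le_trans ENNReal.ofReal_add_le ?_
        exact add_le_add le_rfl ENNReal.ofReal_add_le
    _ = (∫⁻ ω, ENNReal.ofReal (Y ω - infConv Y L ω) ∂(p : Measure (OmegaC d)))
        + ((∫⁻ ω, ENNReal.ofReal ((L:ℝ) * wtil T n ω.1) ∂(p : Measure (OmegaC d)))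
          + (∫⁻ _, ENNReal.ofReal ((L:ℝ)*(1/2:ℝ)^T) ∂(p : Measure (OmegaC d)))) := by
        rw [lintegral_add_left hmeas1, lintegral_add_left hmeas2]
    _ ≤ ENNReal.ofReal (ε/3) + (ENNReal.ofReal (ε/3) + ENNReal.ofReal (ε/3)) := by
        refine add_le_add (hL p hp) (add_le_add ?_ ?_)
        · have heq : (fun ω : OmegaC d => ENNReal.ofReal ((L:ℝ)*wtil T n ω.1))
              = fun ω => ENNReal.ofReal (L:ℝ) * ENNReal.ofReal (wtil T n ω.1) := by
            funext ω
            exact ENNReal.ofReal_mul hL0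
          rw [heq, lintegral_const_mul _ hwmeas]
          calc ENNReal.ofReal (L:ℝ) * ∫⁻ ω, ENNReal.ofReal (wtil T n ω.1)
                ∂(p : Measure (OmegaC d))
              ≤ ENNReal.ofReal (L:ℝ) * ENNReal.ofReal (ε/(3*(L+1))) :=
                mul_le_mul' le_rfl (hB p hp)
            _ = ENNReal.ofReal ((L:ℝ) * (ε/(3*(L+1)))) := (ENNReal.ofReal_mul hL0).symm
            _ ≤ ENNReal.ofReal (ε/3) := by
                apply ENNReal.ofReal_le_ofReal
                have hfrac : (L:ℝ) * (ε/(3*(L+1))) = ε/3 * ((L:ℝ)/(L+1)) := by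
                  field_simp
                rw [hfrac]
                have hle1 : (L:ℝ)/(L+1) ≤ 1 := by
                  rw [div_le_one (by positivity)]
                  linarith
                nlinarith
        · rw [lintegral_const, measure_univ, mul_one]
          apply ENNReal.ofReal_le_ofReal
          have hp2 : (0:ℝ) ≤ (1/2:ℝ)^T := by positivity
          calc (L:ℝ)*(1/2:ℝ)^T ≤ ((L:ℝ)+1)*(1/2:ℝ)^T := by nlinarith
            _ ≤ ((L:ℝ)+1)*(ε/(3*(L+1))) := by nlinarith [hT]
            _ = ε/3 := by field_simp
    _ = ENNReal.ofReal ε := by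
        rw [← ENNReal.ofReal_add hethird hethird, ← ENNReal.ofReal_add hethird (by linarith)]
        congr 1
        ring
/-! ### CLlip facts -/

lemma pow_le_one_add_pow {a : ℝ} (ha : 0 ≤ a) {i j : ℕ} (h : i ≤ j) : a^i ≤ 1 + a^j := by
  rcases le_total a 1 with h1 | h1
  · have h2 : a^i ≤ 1 := pow_le_one₀ ha h1
    have h3 : 0 ≤ a^j := by positivity
    linarith
  · have h2 : a^i ≤ a^j := pow_le_pow_right₀ h1 h
    linarith

lemma mul_pow_le_add {a b : ℝ} (ha : 0 ≤ a) (hb : 0 ≤ b) (i j : ℕ) :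
    a^i * b^j ≤ a^(i+j) + b^(i+j) := by
  rcases le_total a b with h | h
  · calc a^i * b^j ≤ b^i * b^j :=
          mul_le_mul_of_nonneg_right (pow_le_pow_left₀ ha h i) (by positivity)
      _ = b^(i+j) := by rw [← pow_add]
      _ ≤ a^(i+j) + b^(i+j) := le_add_of_nonneg_left (by positivity)
  · calc a^i * b^j ≤ a^i * a^j :=
          mul_le_mul_of_nonneg_left (pow_le_pow_left₀ hb h j) (by positivity)
      _ = a^(i+j) := by rw [← pow_add]
      _ ≤ a^(i+j) + b^(i+j) := le_add_of_nonneg_right (by positivity)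

lemma aux_prod {A B : ℝ} (hA : 0 ≤ A) (hB : 0 ≤ B) (k k' : ℕ) :
    (2 + A^k' + B^k') * (1 + A^k + B^k) ≤ 9 * (1 + A^(k+k') + B^(k+k')) := by
  have p1 : A^k ≤ 1 + A^(k+k') := pow_le_one_add_pow hA (Nat.le_add_right _ _)
  have p2 : B^k ≤ 1 + B^(k+k') := pow_le_one_add_pow hB (Nat.le_add_right _ _)
  have p3 : A^k' ≤ 1 + A^(k+k') := pow_le_one_add_pow hA (Nat.le_add_left _ _)
  have p4 : B^k' ≤ 1 + B^(k+k') := pow_le_one_add_pow hB (Nat.le_add_left _ _)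
  have p5 : A^k' * B^k ≤ A^(k+k') + B^(k+k') := by
    have := mul_pow_le_add hA hB k' k
    rwa [Nat.add_comm k' k] at this
  have p6 : A^k * B^k' ≤ A^(k+k') + B^(k+k') := mul_pow_le_add hA hB k k'
  have p7 : A^k' * A^k = A^(k+k') := by rw [← pow_add, Nat.add_comm k' k]
  have p8 : B^k' * B^k = B^(k+k') := by rw [← pow_add, Nat.add_comm k' k]
  have q1 : (0:ℝ) ≤ A^k := by positivity
  have q2 : (0:ℝ) ≤ B^k := by positivity
  have q3 : (0:ℝ) ≤ A^k' := by positivity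
  have q4 : (0:ℝ) ≤ B^k' := by positivity
  have q5 : (0:ℝ) ≤ A^(k+k') := by positivity
  have q6 : (0:ℝ) ≤ B^(k+k') := by positivity
  nlinarith [p1, p2, p3, p4, p5, p6, p7, p8, q1, q2, q3, q4, q5, q6]

lemma CLlip_growth {E : Type*} [NormedAddCommGroup E] {φ : E → ℝ} (h : CLlip φ) :
    ∃ (D : ℝ) (k : ℕ), 0 ≤ D ∧ ∀ x, |φ x| ≤ D * (1 + ‖x‖^k) := by
  obtain ⟨-, C, k, hC, hb⟩ := h
  refine ⟨|φ 0| + 3*C, k+1, by positivity, fun x => ?_⟩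
  set A := ‖x‖ with hA'
  have hA : 0 ≤ A := norm_nonneg x
  have hP : 0 ≤ A^(k+1) := by positivity
  have h0k : ((0:ℝ))^k ≤ 1 := pow_le_one₀ le_rfl zero_le_one
  have h0k' : (0:ℝ) ≤ (0:ℝ)^k := by positivity
  have hA1 : A ≤ 1 + A^(k+1) := by
    have := pow_le_one_add_pow hA (show 1 ≤ k+1 by omega)
    rwa [pow_one] at this
  have habs : |φ x| ≤ |φ 0| + C * (1 + A^k + (0:ℝ)^k) * A := by
    have h2 := abs_sub_abs_le_abs_sub (φ x) (φ 0)
    have h1 := hb x 0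
    rw [norm_zero, sub_zero] at h1
    linarith
  have hsucc : A^k * A = A^(k+1) := (pow_succ A k).symm
  have h2 : C*A ≤ C + C*A^(k+1) := by nlinarith
  have h3 : C*((0:ℝ)^k*A) ≤ C*A := by
    have h3a := mul_le_mul_of_nonneg_right h0k hA
    have h3b := mul_le_mul_of_nonneg_left h3a hC
    simpa using h3b
  have h4 : 0 ≤ |φ 0| * A^(k+1) := by positivity
  have hexp : C * (1 + A^k + (0:ℝ)^k) * A = C*A + C*(A^k*A) + C*((0:ℝ)^k*A) := by ring
  rw [hexp, hsucc] at habs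
  have hCk : 0 ≤ C * A^(k+1) := by positivity
  nlinarith [habs, h2, h3, h4]

lemma CLlip_sq {E : Type*} [NormedAddCommGroup E] {φ : E → ℝ} (h : CLlip φ) :
    CLlip (fun x => (φ x)^2) := by
  obtain ⟨D, k', hD, hg⟩ := CLlip_growth h
  obtain ⟨hcont, C, k, hC, hb⟩ := h
  refine ⟨hcont.pow 2, 9*(D*C), k + k', by positivity, fun x y => ?_⟩
  have hfact : (φ x)^2 - (φ y)^2 = (φ x + φ y) * (φ x - φ y) := by ring
  rw [hfact, abs_mul]
  have h1 : |φ x + φ y| ≤ D*(2 + ‖x‖^k' + ‖y‖^k') := by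
    have hexp : D*(1+‖x‖^k') + D*(1+‖y‖^k') = D*(2+‖x‖^k'+‖y‖^k') := by ring
    linarith [abs_add_le (φ x) (φ y), hg x, hg y]
  have h2 : |φ x - φ y| ≤ C * (1+‖x‖^k+‖y‖^k) * ‖x-y‖ := hb x y
  calc |φ x + φ y| * |φ x - φ y|
      ≤ (D*(2+‖x‖^k'+‖y‖^k')) * (C*(1+‖x‖^k+‖y‖^k)*‖x-y‖) :=
        mul_le_mul h1 h2 (abs_nonneg _) (by positivity)
    _ = (D*C) * ((2+‖x‖^k'+‖y‖^k')*(1+‖x‖^k+‖y‖^k)) * ‖x-y‖ := by ring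
    _ ≤ (D*C) * (9*(1+‖x‖^(k+k')+‖y‖^(k+k'))) * ‖x-y‖ := by
        apply mul_le_mul_of_nonneg_right _ (norm_nonneg _)
        exact mul_le_mul_of_nonneg_left (aux_prod (norm_nonneg x) (norm_nonneg y) k k')
          (by positivity)
    _ = 9*(D*C) * (1+‖x‖^(k+k')+‖y‖^(k+k')) * ‖x-y‖ := by ring

lemma lipCyl_continuous {d : ℕ} {X : OmegaC d → ℝ} (hX : X ∈ LipCyl d) : Continuous X := by
  obtain ⟨m, t, φ, -, -, hφ, hrep⟩ := hX
  have hXeq : X = fun ω => φ (fun i => ω.1 (t i)) := funext hrep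
  rw [hXeq]
  apply hφ.1.comp
  apply continuous_pi
  intro i
  exact (continuous_eval_const (t i)).comp continuous_subtype_val

lemma clamp_err {z N : ℝ} (hN : 1 ≤ N) : |z - max (-N) (min N z)| ≤ z^2 / N := by
  have hN0 : (0:ℝ) < N := by linarith
  rcases le_total z N with h1 | h1
  · rcases le_total (-N) z with h2 | h2
    · rw [min_eq_right h1, max_eq_right h2, sub_self, abs_zero]
      positivity
    · rw [min_eq_right h1, max_eq_left h2]
      rw [abs_of_nonpos (by linarith)]
      rw [le_div_iff₀ hN0]
      nlinarith
  · rw [min_eq_left h1, max_eq_right (by linarith : -N ≤ N)]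
    rw [abs_of_nonneg (by linarith)]
    rw [le_div_iff₀ hN0]
    nlinarith

/-! ### Every `LipCyl` function is `d`-approximable by bounded continuous functions -/

lemma lipcyl_approx {d : ℕ} {P : Set (ProbabilityMeasure (OmegaC d))}
    (hmom : ∀ (m : ℕ), 1 ≤ m → ∀ t : Fin m → ℝ≥0, StrictMono t →
      ∀ ψ : (Fin m → EuclideanSpace ℝ (Fin d)) → ℝ, CLlip ψ → (∀ x, 0 ≤ ψ x) →
      (⨆ p ∈ P, ∫⁻ ω : OmegaC d, ENNReal.ofReal (ψ (fun i => ω.1 (t i)))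
        ∂(p : Measure (OmegaC d))) < ∞)
    {Z : OmegaC d → ℝ} (hZ : Z ∈ LipCyl d) {ε : ℝ} (hε : 0 < ε) :
    ∃ W : OmegaC d → ℝ, (Continuous W ∧ ∃ M : ℝ, ∀ ω, |W ω| ≤ M) ∧
      ∀ p ∈ P, ∫⁻ ω, ENNReal.ofReal |Z ω - W ω| ∂(p : Measure (OmegaC d))
        ≤ ENNReal.ofReal ε := by
  obtain ⟨m, t, φ, hm, ht, hφ, hrep⟩ := hZ
  have hZcont : Continuous Z := lipCyl_continuous ⟨m, t, φ, hm, ht, hφ, hrep⟩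
  have hψC : CLlip (fun x : Fin m → EuclideanSpace ℝ (Fin d) => (φ x)^2) := CLlip_sq hφ
  have hψ0 : ∀ x : Fin m → EuclideanSpace ℝ (Fin d), 0 ≤ (φ x)^2 := fun x => sq_nonneg _
  have hfin := hmom m hm t ht _ hψC hψ0
  set Mv := (⨆ p ∈ P, ∫⁻ ω : OmegaC d,
    ENNReal.ofReal ((φ (fun i => ω.1 (t i)))^2) ∂(p : Measure (OmegaC d))) with hMv
  have hfin' : Mv < ∞ := hfin
  set r := Mv.toReal with hr
  have hr0 : 0 ≤ r := ENNReal.toReal_nonneg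
  obtain ⟨N, hN⟩ := exists_nat_gt (max (r/ε) 1)
  have hN1 : (1:ℝ) ≤ N := le_of_lt (lt_of_le_of_lt (le_max_right _ _) hN)
  have hNr : r / ε < N := lt_of_le_of_lt (le_max_left _ _) hN
  have hN0 : (0:ℝ) < N := by linarith
  set W : OmegaC d → ℝ := fun ω => max (-(N:ℝ)) (min (N:ℝ) (Z ω)) with hW
  have hψcont : Continuous fun ω : OmegaC d => (φ (fun i => ω.1 (t i)))^2 := by
    apply (hφ.1.pow 2).comp
    apply continuous_pi
    intro i
    exact (continuous_eval_const (t i)).comp continuous_subtype_val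
  have hψmeas : Measurable fun ω : OmegaC d =>
      ENNReal.ofReal ((φ (fun i => ω.1 (t i)))^2) := hψcont.measurable.ennreal_ofReal
  refine ⟨W, ⟨continuous_const.max (continuous_const.min hZcont), ⟨(N:ℝ), fun ω => ?_⟩⟩,
    fun p hp => ?_⟩
  · rw [abs_le]
    constructor
    · exact le_max_left _ _
    · exact max_le (by linarith) (min_le_left _ _)
  · have hpt : ∀ ω : OmegaC d, ENNReal.ofReal |Z ω - W ω|
        ≤ ENNReal.ofReal (1/(N:ℝ)) * ENNReal.ofReal ((φ (fun i => ω.1 (t i)))^2) := by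
      intro ω
      rw [← ENNReal.ofReal_mul (by positivity)]
      apply ENNReal.ofReal_le_ofReal
      have h1 := clamp_err (z := Z ω) hN1
      have h3 : (Z ω)^2 / (N:ℝ) = 1/(N:ℝ) * (φ (fun i => ω.1 (t i)))^2 := by
        rw [← hrep ω]
        ring
      calc |Z ω - W ω| ≤ (Z ω)^2 / (N:ℝ) := h1
        _ = 1/(N:ℝ) * (φ (fun i => ω.1 (t i)))^2 := h3
    calc ∫⁻ ω, ENNReal.ofReal |Z ω - W ω| ∂(p : Measure (OmegaC d))
        ≤ ∫⁻ ω, ENNReal.ofReal (1/(N:ℝ))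
            * ENNReal.ofReal ((φ (fun i => ω.1 (t i)))^2) ∂(p : Measure (OmegaC d)) :=
          lintegral_mono hpt
      _ = ENNReal.ofReal (1/(N:ℝ)) * ∫⁻ ω, ENNReal.ofReal ((φ (fun i => ω.1 (t i)))^2)
            ∂(p : Measure (OmegaC d)) := lintegral_const_mul _ hψmeas
      _ ≤ ENNReal.ofReal (1/(N:ℝ)) * Mv := by
          apply mul_le_mul' le_rfl
          rw [hMv]
          exact le_biSup (f := fun p : ProbabilityMeasure (OmegaC d) =>
            ∫⁻ ω : OmegaC d, ENNReal.ofReal ((φ (fun i => ω.1 (t i)))^2)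
              ∂(p : Measure (OmegaC d))) hp
      _ = ENNReal.ofReal (1/(N:ℝ)) * ENNReal.ofReal r := by
          rw [hr, ENNReal.ofReal_toReal hfin'.ne]
      _ = ENNReal.ofReal (r/(N:ℝ)) := by
          rw [← ENNReal.ofReal_mul (by positivity)]
          congr 1
          ring
      _ ≤ ENNReal.ofReal ε := by
          apply ENNReal.ofReal_le_ofReal
          rw [div_le_iff₀ hN0]
          have := (div_lt_iff₀ hε).mp hNr
          nlinarith

/-- `L¹_G(Ω) = 𝕃¹_c`: for a nonempty weakly compact family `𝒫` of Borel probability measures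
on `Ω` with uniformly finite moments of cylinder type, the closure of `L_ip(Ω)` in
`(𝕃¹, d)` equals the closure of the bounded continuous functions `C_b(Ω)` in `(𝕃¹, d)`. -/
theorem stmt15 {d : ℕ} (hd : 1 ≤ d)
    (P : Set (ProbabilityMeasure (OmegaC d))) (hne : P.Nonempty) (hcomp : IsCompact P)
    (hmom : ∀ (m : ℕ), 1 ≤ m → ∀ t : Fin m → ℝ≥0, StrictMono t →
      ∀ ψ : (Fin m → EuclideanSpace ℝ (Fin d)) → ℝ, CLlip ψ → (∀ x, 0 ≤ ψ x) →
      (⨆ p ∈ P, ∫⁻ ω : OmegaC d, ENNReal.ofReal (ψ (fun i => ω.1 (t i)))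
        ∂(p : Measure (OmegaC d))) < ∞) :
    closureInL1 P (LipCyl d) =
      closureInL1 P {Y : OmegaC d → ℝ | Continuous Y ∧ ∃ M : ℝ, ∀ ω, |Y ω| ≤ M} := by
  ext X
  simp only [closureInL1, Set.mem_setOf_eq]
  constructor
  · rintro ⟨hXm, hXf, hap⟩
    refine ⟨hXm, hXf, fun ε hε => ?_⟩
    obtain ⟨Z, hZmem, hZd⟩ := hap (ε/2) (by linarith)
    obtain ⟨W, hWmem, hWd⟩ := lipcyl_approx hmom hZmem (ε := ε/2) (by linarith)
    refine ⟨W, hWmem, ?_⟩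
    have hZcont := lipCyl_continuous hZmem
    rw [upperExpAbs]
    apply iSup₂_le
    intro p hp
    have hmeas1 : Measurable fun ω : OmegaC d => ENNReal.ofReal |X ω - Z ω| :=
      ((hXm.sub hZcont.measurable).abs).ennreal_ofReal
    calc ∫⁻ ω, ENNReal.ofReal |X ω - W ω| ∂(p : Measure (OmegaC d))
        ≤ ∫⁻ ω, (ENNReal.ofReal |X ω - Z ω| + ENNReal.ofReal |Z ω - W ω|)
            ∂(p : Measure (OmegaC d)) := by
          apply lintegral_mono
          intro ω
          exact le_trans (ENNReal.ofReal_le_ofReal (abs_sub_le _ _ _)) ENNReal.ofReal_add_le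
      _ = (∫⁻ ω, ENNReal.ofReal |X ω - Z ω| ∂(p : Measure (OmegaC d)))
          + (∫⁻ ω, ENNReal.ofReal |Z ω - W ω| ∂(p : Measure (OmegaC d))) :=
          lintegral_add_left hmeas1 _
      _ ≤ ENNReal.ofReal (ε/2) + ENNReal.ofReal (ε/2) := by
          refine add_le_add (le_trans ?_ hZd) (hWd p hp)
          exact le_biSup (f := fun p : ProbabilityMeasure (OmegaC d) =>
            ∫⁻ ω, ENNReal.ofReal |X ω - Z ω| ∂(p : Measure (OmegaC d))) hp
      _ = ENNReal.ofReal ε := by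
          rw [← ENNReal.ofReal_add (by linarith) (by linarith)]
          congr 1
          ring
  · rintro ⟨hXm, hXf, hap⟩
    refine ⟨hXm, hXf, fun ε hε => ?_⟩
    obtain ⟨W, hWmem, hWd⟩ := hap (ε/2) (by linarith)
    obtain ⟨hWc, Mb, hMb⟩ := hWmem
    obtain ⟨Z, hZmem, hZd⟩ := cb_approx hcomp hWc hMb (ε := ε/2) (by linarith)
    refine ⟨Z, hZmem, ?_⟩
    rw [upperExpAbs]
    apply iSup₂_le
    intro p hp
    have hmeas1 : Measurable fun ω : OmegaC d => ENNReal.ofReal |X ω - W ω| :=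
      ((hXm.sub hWc.measurable).abs).ennreal_ofReal
    calc ∫⁻ ω, ENNReal.ofReal |X ω - Z ω| ∂(p : Measure (OmegaC d))
        ≤ ∫⁻ ω, (ENNReal.ofReal |X ω - W ω| + ENNReal.ofReal |W ω - Z ω|)
            ∂(p : Measure (OmegaC d)) := by
          apply lintegral_mono
          intro ω
          exact le_trans (ENNReal.ofReal_le_ofReal (abs_sub_le _ _ _)) ENNReal.ofReal_add_le
      _ = (∫⁻ ω, ENNReal.ofReal |X ω - W ω| ∂(p : Measure (OmegaC d)))
          + (∫⁻ ω, ENNReal.ofReal |W ω - Z ω| ∂(p : Measure (OmegaC d))) :=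
          lintegral_add_left hmeas1 _
      _ ≤ ENNReal.ofReal (ε/2) + ENNReal.ofReal (ε/2) := by
          refine add_le_add (le_trans ?_ hWd) (hZd p hp)
          exact le_biSup (f := fun p : ProbabilityMeasure (OmegaC d) =>
            ∫⁻ ω, ENNReal.ofReal |X ω - W ω| ∂(p : Measure (OmegaC d))) hp
      _ = ENNReal.ofReal ε := by
          rw [← ENNReal.ofReal_add (by linarith) (by linarith)]
          congr 1
          ring
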